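/- arXiv:2001.08330 — 7 statements merged into one kernel-verified Lean document; each statement's English description precedes it below -/
import Mathlib

section
/- Let 0 < b < a be real numbers. Then √(ab) < (a − b)/log(a/b) < (a + b + 2√(ab))/4 ≤ (a + b)/2. In particular the logarithmic mean of a and b lies strictly between the geometric mean and the arithmetic mean of the arithmetic and geometric means. -/
lemma sinh_lt_mul_cosh_aux {x : ℝ} (hx : 0 < x) : Real.sinh x < x * Real.cosh x := by
  have h : StrictMonoOn (fun y => y * Real.cosh y - Real.sinh y) (Set.Ici 0) := by
    apply strictMonoOn_of_deriv_pos (convex_Ici 0)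
    · exact (continuous_id.mul Real.continuous_cosh).sub Real.continuous_sinh |>.continuousOn
    · intro y hy
      rw [interior_Ici, Set.mem_Ioi] at hy
      have hd : HasDerivAt (fun y => y * Real.cosh y - Real.sinh y) (y * Real.sinh y) y := by
        have := ((hasDerivAt_id y).mul (Real.hasDerivAt_cosh y)).sub (Real.hasDerivAt_sinh y)
        exact this.congr_deriv (by simp)
      rw [hd.deriv]
      exact mul_pos hy (Real.sinh_pos_iff.2 hy)
  have := h (Set.self_mem_Ici) (Set.mem_Ici.2 hx.le) hx
  simpa using this

/-- For reals `0 < b < a`, the logarithmic mean `(a - b) / log (a / b)` lies strictly between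
the geometric mean `√(ab)` and `(a + b + 2√(ab))/4`, which in turn is at most the
arithmetic mean `(a + b)/2`. -/
theorem log_mean_between (a b : ℝ) (hb : 0 < b) (hba : b < a) :
    Real.sqrt (a * b) < (a - b) / Real.log (a / b) ∧
    (a - b) / Real.log (a / b) < (a + b + 2 * Real.sqrt (a * b)) / 4 ∧
    (a + b + 2 * Real.sqrt (a * b)) / 4 ≤ (a + b) / 2 := by
  have ha : 0 < a := hb.trans hba
  set c := Real.log (a / b) with hcdef
  have hab1 : 1 < a / b := (one_lt_div hb).2 hba
  have hc : 0 < c := Real.log_pos hab1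
  have hexp : Real.exp c = a / b := Real.exp_log (by positivity)
  have hae : a = b * Real.exp c := by
    field_simp at hexp; linarith [hexp]
  set e := Real.exp (c / 2) with hedef
  have he : 0 < e := Real.exp_pos _
  have hee : e * e = Real.exp c := by
    rw [hedef, ← Real.exp_add]; ring_nf
  -- sqrt(ab) = b * e
  have hsqrt : Real.sqrt (a * b) = b * e := by
    have : a * b = (b * e) ^ 2 := by
      rw [hae]; nlinarith [hee]
    rw [this, Real.sqrt_sq (by positivity)]
  -- From c/2 < sinh(c/2):  c < e - 1/e, i.e. c * e < e^2 - 1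
  have h1 : c * e < e * e - 1 := by
    have hs := (Real.self_lt_sinh_iff.2 (by linarith : (0:ℝ) < c / 2))
    rw [Real.sinh_eq] at hs
    have hne : Real.exp (-(c/2)) = 1 / e := by
      rw [Real.exp_neg, hedef]; field_simp
    rw [hne] at hs
    have : c / 2 < (e - 1 / e) / 2 := hs
    have h2 : c < e - 1 / e := by linarith
    have := mul_lt_mul_of_pos_right h2 he
    calc c * e < (e - 1/e) * e := this
      _ = e * e - 1 := by field_simp
  -- From sinh(c/4) < (c/4) cosh(c/4):  4(e-1) < c(e+1)
  have h2 : 4 * (e - 1) < c * (e + 1) := by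
    have hs := sinh_lt_mul_cosh_aux (by linarith : (0:ℝ) < c / 4)
    rw [Real.sinh_eq, Real.cosh_eq] at hs
    set f := Real.exp (c / 4) with hfdef
    have hf : 0 < f := Real.exp_pos _
    have hnf : Real.exp (-(c/4)) = 1 / f := by
      rw [Real.exp_neg, hfdef]; field_simp
    rw [hnf] at hs
    have hff : f * f = e := by
      rw [hfdef, hedef, ← Real.exp_add]; ring_nf
    -- hs : (f - 1/f)/2 < (c/4) * ((f + 1/f)/2)
    have hs' : f - 1 / f < c / 4 * (f + 1 / f) := by linarith
    have := mul_lt_mul_of_pos_right hs' hf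
    have key : f * f - 1 < c / 4 * (f * f + 1) := by
      have e1 : (f - 1/f) * f = f * f - 1 := by field_simp
      have e2 : (c / 4 * (f + 1/f)) * f = c / 4 * (f * f + 1) := by field_simp
      rw [e1, e2] at this; exact this
    rw [hff] at key; linarith
  rw [hsqrt, hae]
  have hd1 : b * Real.exp c - b = b * (e * e - 1) := by rw [← hee]; ring
  have hd2 : b * Real.exp c + b + 2 * (b * e) = b * (e + 1) ^ 2 := by rw [← hee]; ring
  refine ⟨?_, ?_, ?_⟩
  · rw [lt_div_iff₀ hc, hd1]
    nlinarith [mul_pos hb he]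
  · rw [div_lt_div_iff₀ hc (by norm_num : (0:ℝ) < 4), hd1, hd2]
    have hep1 : 0 < e + 1 := by linarith
    nlinarith [mul_pos hb hep1, mul_pos (mul_pos hb hep1) hep1]
  ·
    rw [hd2]
    have h4 : b * Real.exp c + b = b * (e * e + 1) := by rw [← hee]; ring
    rw [h4]
    nlinarith [sq_nonneg (e - 1), hb.le]
end

section
/- Let 0 < r < R be real numbers. Then √(rR) < √((R² − r²)/(2·log(R/r))) < (R + r)/2. -/
lemma log_lt_aux {t : ℝ} (ht : 1 < t) : Real.log t < (t - 1/t) / 2 := by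
  set f : ℝ → ℝ := fun x => (x - 1/x) / 2 - Real.log x with hf
  have key : StrictMonoOn f (Set.Ici 1) := by
    apply strictMonoOn_of_deriv_pos (convex_Ici 1)
    · apply ContinuousOn.sub
      · apply ContinuousOn.div_const
        apply ContinuousOn.sub continuousOn_id
        apply ContinuousOn.div continuousOn_const continuousOn_id
        intro x hx; simp at hx; positivity
      · apply ContinuousOn.log continuousOn_id
        intro x hx; simp at hx; positivity
    · intro x hx
      rw [interior_Ici] at hx
      have hx1 : (1:ℝ) < x := hx
      have hx0 : (0:ℝ) < x := by linarith
      have hd : HasDerivAt f ((1 - (-(x^2)⁻¹)) / 2 - x⁻¹) x := by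
        have h1 : HasDerivAt (fun y : ℝ => y - 1/y) (1 - (-(x^2)⁻¹)) x := by
          simpa [Pi.sub_def] using (hasDerivAt_id' x).sub ((hasDerivAt_inv hx0.ne').const_mul 1)
        exact (h1.div_const 2).sub (Real.hasDerivAt_log hx0.ne')
      rw [hd.deriv]
      have h2 : (1 - (-(x^2)⁻¹)) / 2 - x⁻¹ = (x - 1)^2 / (2 * x^2) := by
        field_simp; ring
      rw [h2]
      exact div_pos (pow_pos (by linarith) 2) (by positivity)
  have h1 : f 1 < f t := key (by simp) (le_of_lt ht) ht
  have hf1 : f 1 = 0 := by simp [hf]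
  rw [hf1] at h1
  have : 0 < (t - 1/t)/2 - Real.log t := h1
  linarith

lemma lt_log_aux {t : ℝ} (ht : 1 < t) : 2 * (t - 1) / (t + 1) < Real.log t := by
  set g : ℝ → ℝ := fun x => Real.log x - 2 * (x - 1) / (x + 1) with hg
  have key : StrictMonoOn g (Set.Ici 1) := by
    apply strictMonoOn_of_deriv_pos (convex_Ici 1)
    · apply ContinuousOn.sub
      · apply ContinuousOn.log continuousOn_id
        intro x hx; simp at hx; positivity
      · apply ContinuousOn.div
        · fun_prop
        · fun_prop
        · intro x hx; simp at hx; positivity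
    · intro x hx
      rw [interior_Ici] at hx
      have hx1 : (1:ℝ) < x := hx
      have hx0 : (0:ℝ) < x := by linarith
      have hx1' : (0:ℝ) < x + 1 := by linarith
      have hd : HasDerivAt g (x⁻¹ - (2 * (x + 1) - 2 * (x - 1) * 1) / (x + 1)^2) x := by
        have h1 : HasDerivAt (fun y : ℝ => 2 * (y - 1)) 2 x := by
          simpa using ((hasDerivAt_id x).sub_const 1).const_mul 2
        have h2 : HasDerivAt (fun y : ℝ => y + 1) 1 x := by
          simpa using (hasDerivAt_id x).add_const 1
        exact (Real.hasDerivAt_log hx0.ne').sub (h1.div h2 hx1'.ne')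
      rw [hd.deriv]
      have h2 : x⁻¹ - (2 * (x + 1) - 2 * (x - 1) * 1) / (x + 1)^2 = (x - 1)^2 / (x * (x + 1)^2) := by
        field_simp; ring
      rw [h2]
      exact div_pos (pow_pos (by linarith) 2) (by positivity)
  have h1 : g 1 < g t := key (by simp) (le_of_lt ht) ht
  have hg1 : g 1 = 0 := by simp [hg]
  rw [hg1] at h1
  have : 0 < Real.log t - 2 * (t - 1) / (t + 1) := h1
  linarith

/-- For reals `0 < r < R`, one has `√(rR) < √((R² - r²)/(2 log(R/r))) < (R + r)/2`. -/
theorem sqrt_mean_bounds (r R : ℝ) (hr : 0 < r) (hrR : r < R) :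
    Real.sqrt (r * R) < Real.sqrt ((R ^ 2 - r ^ 2) / (2 * Real.log (R / r))) ∧
    Real.sqrt ((R ^ 2 - r ^ 2) / (2 * Real.log (R / r))) < (R + r) / 2 := by
  have hR : 0 < R := hr.trans hrR
  have ht : 1 < R / r := (one_lt_div hr).mpr hrR
  have hlogpos : 0 < Real.log (R / r) := Real.log_pos ht
  have hupper := log_lt_aux ht
  have hlower := lt_log_aux ht
  have hlogeq : Real.log (R / r) = Real.log (R / r) := rfl
  -- key algebraic facts: rewrite (R/r - r/R) etc.
  have h1 : r * R < (R ^ 2 - r ^ 2) / (2 * Real.log (R / r)) := by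
    rw [lt_div_iff₀ (by positivity)]
    have : (R / r - 1 / (R / r)) / 2 = (R ^ 2 - r ^ 2) / (2 * (r * R)) := by
      field_simp
    rw [this] at hupper
    have := (mul_lt_mul_iff_of_pos_right (show (0:ℝ) < 2 * (r * R) by positivity)).mpr hupper
    rw [div_mul_cancel₀] at this
    · nlinarith [this]
    · positivity
  have h2 : (R ^ 2 - r ^ 2) / (2 * Real.log (R / r)) < ((R + r) / 2) ^ 2 := by
    rw [div_lt_iff₀ (by positivity)]
    have : 2 * (R / r - 1) / (R / r + 1) = 2 * (R - r) / (R + r) := by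
      field_simp
    rw [this] at hlower
    have hRr : 0 < R + r := by linarith
    have := (mul_lt_mul_iff_of_pos_right hRr).mpr hlower
    rw [div_mul_cancel₀ _ hRr.ne'] at this
    nlinarith [this, hlogpos]
  constructor
  · exact Real.sqrt_lt_sqrt (by positivity) h1
  · calc Real.sqrt ((R ^ 2 - r ^ 2) / (2 * Real.log (R / r)))
        < Real.sqrt (((R + r) / 2) ^ 2) := by
          apply Real.sqrt_lt_sqrt _ h2
          have : 0 < R ^ 2 - r ^ 2 := by nlinarith
          positivity
      _ = (R + r) / 2 := Real.sqrt_sq (by positivity)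
end

section
/- Let 0 < r < R and let z ∈ ℂ satisfy r < |z| < R and Re z > (r + R)/2. Then the reflection of z over the vertical line {Re w = (r + R)/2}, namely the point (r + R) − conj(z), again satisfies r < |(r + R) − conj(z)| < R. In other words, the line {Re w = (r + R)/2} is a partial symmetry axis of the annulus A_{r,R}, with symmetric side {z ∈ A_{r,R} : Re z > (r + R)/2}. -/
/-- The vertical line `{Re w = (r + R)/2}` is a partial symmetry axis of the annulus
`{r < |z| < R}`: if `r < |z| < R` and `Re z > (r + R)/2` then the reflected point
`(r + R) - conj z` again lies in the annulus. -/
theorem annulus_partial_symmetry_axis (r R : ℝ) (hr : 0 < r) (hrR : r < R)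
    (z : ℂ) (h1 : r < ‖z‖) (h2 : ‖z‖ < R)
    (h3 : (r + R) / 2 < z.re) :
    r < ‖((r : ℂ) + (R : ℂ)) - (starRingEnd ℂ) z‖ ∧
    ‖((r : ℂ) + (R : ℂ)) - (starRingEnd ℂ) z‖ < R := by
  set w : ℂ := ((r : ℂ) + (R : ℂ)) - (starRingEnd ℂ) z with hw
  have hwre : w.re = r + R - z.re := by simp [hw]
  have hwim : w.im = z.im := by simp [hw]
  have hx : z.re ≤ ‖z‖ := Complex.re_le_norm z
  have hwa : w.re ≤ ‖w‖ := Complex.re_le_norm w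
  constructor
  · have : r < w.re := by rw [hwre]; linarith
    linarith
  · have hsq : ‖w‖ ^ 2 < R ^ 2 := by
      have h1' : ‖w‖ ^ 2 = (r + R - z.re) ^ 2 + z.im ^ 2 := by
        rw [Complex.sq_norm, Complex.normSq_apply, hwre, hwim]; ring
      have h2' : ‖z‖ ^ 2 = z.re ^ 2 + z.im ^ 2 := by
        rw [Complex.sq_norm, Complex.normSq_apply]; ring
      nlinarith [norm_nonneg z]
    nlinarith [norm_nonneg w]
end

section
/- Let z ∈ ℂ satisfy |z| < 1, Im z > 0, and |z + i| < √2 (i.e. z lies in the upper half-disk and inside the circle C = {|w + i| = √2}). Then the reflection of z over C, namely the point w = −i + 2/conj(z + i), satisfies |w| < 1, Im w > 0, and |w + i| > √2. In other words, the reflection over C of the part of the upper half-disk inside C is contained in the part of the upper half-disk outside C. -/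
/-- Reflection over the circle `C = {|w + i| = √2}` maps the part of the upper half-disk
inside `C` into the part of the upper half-disk outside `C`: if `|z| < 1`, `Im z > 0` and
`|z + i| < √2`, then `w = -i + 2/conj(z + i)` satisfies `|w| < 1`, `Im w > 0`, and
`|w + i| > √2`. -/
theorem halfdisk_circle_reflection (z : ℂ)
    (h1 : ‖z‖ < 1) (h2 : 0 < z.im)
    (h3 : ‖z + Complex.I‖ < Real.sqrt 2) :
    ‖-Complex.I + 2 / (starRingEnd ℂ) (z + Complex.I)‖ < 1 ∧
    0 < (-Complex.I + 2 / (starRingEnd ℂ) (z + Complex.I)).im ∧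
    Real.sqrt 2 <
      ‖(-Complex.I + 2 / (starRingEnd ℂ) (z + Complex.I)) + Complex.I‖ := by
  have ha : z.re^2 + z.im^2 < 1 := by
    have h := Complex.sq_norm z
    rw [Complex.normSq_apply] at h
    nlinarith [norm_nonneg z]
  have hs : z.re^2 + (z.im+1)^2 < 2 := by
    have h := Complex.sq_norm (z + Complex.I)
    rw [Complex.normSq_apply] at h
    simp [Complex.add_re, Complex.add_im] at h
    nlinarith [norm_nonneg (z+Complex.I),
      Real.sq_sqrt (by norm_num : (0:ℝ) ≤ 2)]
  have hs0 : 0 < z.re^2 + (z.im+1)^2 := by nlinarith [sq_nonneg z.re]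
  have hns : Complex.normSq ((starRingEnd ℂ) z + -Complex.I) = z.re^2 + (z.im+1)^2 := by
    simp [Complex.normSq_apply, Complex.add_re, Complex.add_im]; ring
  have hz0 : z + Complex.I ≠ 0 := by
    intro h
    have := congrArg Complex.im h
    simp at this
    linarith
  have hr0 : 0 < ‖z + Complex.I‖ := by
    simpa [norm_pos_iff] using hz0
  refine ⟨?_, ?_, ?_⟩
  · rw [show (1:ℝ) = Real.sqrt 1 by simp, Complex.norm_def]
    apply Real.sqrt_lt_sqrt (Complex.normSq_nonneg _)
    rw [Complex.normSq_apply]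
    simp only [Complex.add_re, Complex.add_im, Complex.div_re, Complex.div_im, hns,
      Complex.neg_re, Complex.neg_im, Complex.I_re, Complex.I_im, map_add,
      Complex.conj_re, Complex.conj_im, Complex.conj_I, Complex.ofReal_re,
      Complex.ofReal_im, Complex.re_ofNat, Complex.im_ofNat, mul_zero, zero_mul,
      zero_add, add_zero, neg_zero, zero_div, neg_neg]
    set s := z.re^2 + (z.im+1)^2 with hsdef
    have h4 : 2 * z.re / s * (2 * z.re / s) +
        (-1 + (0 - 2 * (-z.im + -1) / s)) * (-1 + (0 - 2 * (-z.im + -1) / s)) - 1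
        = -(4 * z.im / s) := by
      field_simp
      ring
    have h5 : 0 < 4 * z.im / s := by positivity
    nlinarith [h4, h5]
  · have h4 : (-Complex.I + 2 / (starRingEnd ℂ) (z + Complex.I)).im
        = (1 - z.re^2 - z.im^2) / (z.re^2 + (z.im+1)^2) := by
      simp only [Complex.add_im, Complex.div_im, Complex.neg_im, Complex.I_im, map_add,
        Complex.conj_re, Complex.conj_im, Complex.conj_I, Complex.add_re, Complex.neg_re,
        Complex.I_re, Complex.re_ofNat, Complex.im_ofNat, hns]
      field_simp
      ring
    rw [h4]
    have : 0 < 1 - z.re^2 - z.im^2 := by linarith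
    positivity
  · have h4 : -Complex.I + 2 / (starRingEnd ℂ) (z + Complex.I) + Complex.I
        = 2 / (starRingEnd ℂ) (z + Complex.I) := by ring
    rw [h4, norm_div, Complex.norm_conj]
    have h5 : ‖(2:ℂ)‖ = 2 := by norm_num
    rw [h5, lt_div_iff₀ hr0]
    nlinarith [Real.sq_sqrt (by norm_num : (0:ℝ) ≤ 2), Real.sqrt_nonneg 2]
end

section
/- Let U ⊆ ℂ be a nonempty open connected set, and suppose L₁ and L₂ are two distinct parallel lines (one-dimensional affine subspaces of ℂ ≅ ℝ²) such that, for each j ∈ {1,2}, the reflection σ_{L_j} over L_j maps U onto U and U is L_j-convex, i.e. for every z ∈ U the segment joining z and σ_{L_j}(z) is contained in U. Then there exist θ ∈ ℝ and extended reals a ∈ [−∞, ∞), b ∈ (−∞, ∞] with a < b such that U = {z ∈ ℂ : a < Re(e^{−iθ} z) < b}; in other words, U is all of ℂ, an open half-plane, or an open infinite strip. -/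
/-- The line through the point `p` with (unit) direction `v`. -/
def lineThrough (p v : ℂ) : Set ℂ := {z : ℂ | ∃ t : ℝ, z = p + (t : ℂ) * v}

/-- Orthogonal reflection over the line through `p` with unit direction `v`:
`z ↦ p + v² ⬝ conj (z - p)`. -/
def reflLine (p v : ℂ) (z : ℂ) : ℂ := p + v ^ 2 * (starRingEnd ℂ) (z - p)

lemma slice_full_aux (S : Set ℝ) (c₁ c₂ : ℝ) (hc : c₁ < c₂)
    (h₁ : ∀ y ∈ S, ∀ s : ℝ, |s - c₁| ≤ |y - c₁| → s ∈ S)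
    (h₂ : ∀ y ∈ S, ∀ s : ℝ, |s - c₂| ≤ |y - c₂| → s ∈ S)
    (y₀ : ℝ) (hy₀ : y₀ ∈ S) : ∀ s : ℝ, s ∈ S := by
  set d := c₂ - c₁ with hd
  have hdpos : 0 < d := by simp [hd]; linarith
  have hc1 : c₁ ∈ S := h₁ y₀ hy₀ c₁ (by simp [abs_nonneg])
  have hn : ∀ n : ℕ, c₁ + n * d ∈ S := by
    intro n
    induction n with
    | zero => simpa using hc1
    | succ n ih =>
      have hneg : c₁ - n * d ∈ S := by
        apply h₁ _ ih
        rw [show c₁ - ↑n * d - c₁ = -(n*d) by ring, show c₁ + ↑n * d - c₁ = n*d by ring, abs_neg]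
      apply h₂ _ hneg
      have e2 : c₁ - ↑n * d - c₂ = -((n+1) * d) := by rw [hd]; push_cast; ring
      have e3 : c₁ + (↑(n+1)) * d - c₂ = n * d := by rw [hd]; push_cast; ring
      rw [e2, e3, abs_neg, abs_of_nonneg (by positivity), abs_of_nonneg (by positivity)]
      nlinarith
  intro s
  obtain ⟨n, hnn⟩ := exists_nat_ge (|s - c₁| / d)
  apply h₁ _ (hn n)
  rw [show c₁ + ↑n * d - c₁ = (n:ℝ)*d by ring]
  refine le_trans ?_ (le_abs_self _)
  calc |s - c₁| = |s - c₁| / d * d := by field_simp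
    _ ≤ (n:ℝ) * d := by nlinarith [abs_nonneg (s - c₁)]

lemma open_conn_interval (A : Set ℝ) (hA : IsOpen A) (hc : IsPreconnected A)
    (hne : A.Nonempty) :
    ∃ a b : EReal, a ≠ ⊤ ∧ b ≠ ⊥ ∧ a < b ∧
      ∀ x : ℝ, x ∈ A ↔ a < (x : EReal) ∧ (x : EReal) < b := by
  set a : EReal := sInf (Real.toEReal '' A) with ha
  set b : EReal := sSup (Real.toEReal '' A) with hb
  have hmemlt : ∀ x ∈ A, a < (x : EReal) ∧ (x : EReal) < b := by
    intro x hx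
    obtain ⟨ε, hε, hball⟩ := Metric.isOpen_iff.mp hA x hx
    have hl : x - ε/2 ∈ A := by
      apply hball; rw [Metric.mem_ball, Real.dist_eq]
      rw [abs_of_nonpos (by linarith)]; linarith
    have hr : x + ε/2 ∈ A := by
      apply hball; rw [Metric.mem_ball, Real.dist_eq]
      rw [abs_of_nonneg (by linarith)]; linarith
    constructor
    · refine lt_of_le_of_lt (sInf_le ⟨_, hl, rfl⟩) ?_
      exact EReal.coe_lt_coe_iff.mpr (by linarith)
    · refine lt_of_lt_of_le (EReal.coe_lt_coe_iff.mpr (show x < x + ε/2 by linarith)) (le_sSup ⟨_, hr, rfl⟩)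
  have hoc : A.OrdConnected := hc.ordConnected
  refine ⟨a, b, ?_, ?_, ?_, ?_⟩
  · obtain ⟨x₀, hx₀⟩ := hne
    exact (lt_of_le_of_lt (sInf_le (Set.mem_image_of_mem _ hx₀)) (EReal.coe_lt_top x₀)).ne
  · obtain ⟨x₀, hx₀⟩ := hne
    exact (lt_of_lt_of_le (EReal.bot_lt_coe x₀) (le_sSup (Set.mem_image_of_mem _ hx₀))).ne'
  · obtain ⟨x₀, hx₀⟩ := hne
    exact lt_trans (hmemlt x₀ hx₀).1 (hmemlt x₀ hx₀).2
  · intro x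
    constructor
    · exact hmemlt x
    · rintro ⟨hax, hxb⟩
      obtain ⟨u, ⟨y, hy, rfl⟩, hu⟩ := sInf_lt_iff.mp hax
      obtain ⟨u', ⟨z, hz, rfl⟩, hu'⟩ := lt_sSup_iff.mp hxb
      have hyx : y ≤ x := le_of_lt (EReal.coe_lt_coe_iff.mp hu)
      have hxz : x ≤ z := le_of_lt (EReal.coe_lt_coe_iff.mp hu')
      exact hoc.out hy hz ⟨hyx, hxz⟩

theorem refl_identity (v₁ : ℂ) (hv₁ : ‖v₁‖ = 1) (p z : ℂ)
    (e : ℂ) (hec : e = (starRingEnd ℂ) v₁) :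
    e * reflLine p v₁ z
      = (starRingEnd ℂ) (e * z) + 2 * ((e * p).im : ℂ) * Complex.I := by
  have h1 : v₁ * (starRingEnd ℂ) v₁ = 1 := by
    rw [Complex.mul_conj]; norm_cast; rw [Complex.normSq_eq_norm_sq, hv₁]; norm_num
  have h2 : 2 * ((e*p).im:ℂ) * Complex.I = e * p - (starRingEnd ℂ) (e * p) := by
    have := Complex.sub_conj (e*p); push_cast at this; rw [this]
  rw [reflLine, h2]
  subst hec
  simp only [map_sub, map_mul, Complex.conj_conj]
  linear_combination ((starRingEnd ℂ) z - (starRingEnd ℂ) p) * v₁ * h1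

theorem line_eq' (p₁ v₁ p₂ v₂ : ℂ) (t₀ : ℝ) (h : p₂ = p₁ + (t₀:ℂ) * v₁)
    (hpar : v₂ = v₁ ∨ v₂ = -v₁) : lineThrough p₁ v₁ = lineThrough p₂ v₂ := by
  ext z
  simp only [lineThrough, Set.mem_setOf_eq]
  constructor
  · rintro ⟨t, rfl⟩
    rcases hpar with rfl | rfl
    · exact ⟨t - t₀, by rw [h]; push_cast; ring⟩
    · exact ⟨t₀ - t, by rw [h]; push_cast; ring⟩
  · rintro ⟨t, rfl⟩
    rcases hpar with rfl | rfl
    · exact ⟨t + t₀, by rw [h]; push_cast; ring⟩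
    · exact ⟨t₀ - t, by rw [h]; push_cast; ring⟩


/-- If a nonempty domain `U ⊆ ℂ` has two distinct parallel symmetry axes with respect to
each of which it is `Δ`-convex, then `U` is (a rotation of) `{a < Re z < b}` for some
extended reals `a ∈ [-∞, ∞)`, `b ∈ (-∞, ∞]`; i.e. `U` is `ℂ`, a half-plane, or a strip. -/
theorem two_parallel_axes_strip (U : Set ℂ) (hne : U.Nonempty) (hopen : IsOpen U)
    (hconn : IsConnected U)
    (p₁ v₁ p₂ v₂ : ℂ) (hv₁ : ‖v₁‖ = 1) (hv₂ : ‖v₂‖ = 1)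
    (hpar : v₂ = v₁ ∨ v₂ = -v₁)
    (hdistinct : lineThrough p₁ v₁ ≠ lineThrough p₂ v₂)
    (hsym₁ : reflLine p₁ v₁ '' U = U) (hsym₂ : reflLine p₂ v₂ '' U = U)
    (hconv₁ : ∀ z ∈ U, ∀ t : ℝ, 0 ≤ t → t ≤ 1 →
      (t : ℂ) * z + (1 - (t : ℂ)) * reflLine p₁ v₁ z ∈ U)
    (hconv₂ : ∀ z ∈ U, ∀ t : ℝ, 0 ≤ t → t ≤ 1 →
      (t : ℂ) * z + (1 - (t : ℂ)) * reflLine p₂ v₂ z ∈ U) :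
    ∃ (θ : ℝ) (a b : EReal), a ≠ ⊤ ∧ b ≠ ⊥ ∧ a < b ∧
      U = {z : ℂ | a < ((Complex.exp (-(θ : ℂ) * Complex.I) * z).re : EReal) ∧
        ((Complex.exp (-(θ : ℂ) * Complex.I) * z).re : EReal) < b} := by
  set θ := Complex.arg v₁ with hθ
  set e := Complex.exp (-(θ:ℂ) * Complex.I) with he
  have hv1ne : v₁ ≠ 0 := by
    intro h; rw [h] at hv₁; simp at hv₁
  have hexp : Complex.exp ((θ:ℂ) * Complex.I) = v₁ := by
    have := Complex.norm_mul_exp_arg_mul_I v₁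
    rw [hv₁] at this; simpa using this
  have hev : e * v₁ = 1 := by
    rw [he, ← hexp, ← Complex.exp_add,
      show -(θ:ℂ)*Complex.I + (θ:ℂ)*Complex.I = 0 by ring, Complex.exp_zero]
  have h1 : v₁ * (starRingEnd ℂ) v₁ = 1 := by
    rw [Complex.mul_conj]; norm_cast; rw [Complex.normSq_eq_norm_sq, hv₁]; norm_num
  have hec : e = (starRingEnd ℂ) v₁ := by
    calc e = e * (v₁ * (starRingEnd ℂ) v₁) := by rw [h1, mul_one]
      _ = (e * v₁) * (starRingEnd ℂ) v₁ := by ring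
      _ = (starRingEnd ℂ) v₁ := by rw [hev, one_mul]
  have hene : e ≠ 0 := by rw [he]; exact Complex.exp_ne_zero _
  set c₁ := (e * p₁).im with hc₁
  set c₂ := (e * p₂).im with hc₂
  -- the two axes give distinct levels
  have hcne : c₁ ≠ c₂ := by
    intro hcc
    apply hdistinct
    have him : (e * (p₂ - p₁)).im = 0 := by
      rw [mul_sub, Complex.sub_im, ← hc₁, ← hc₂, hcc]; ring
    set t₀ := (e * (p₂ - p₁)).re with ht₀
    have hreal : e * (p₂ - p₁) = (t₀:ℂ) := by
      apply Complex.ext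
      · simp [ht₀]
      · simp [him]
    apply line_eq' p₁ v₁ p₂ v₂ t₀ _ hpar
    linear_combination v₁ * hreal - (p₂ - p₁) * hev
  set V := (fun z => e * z) '' U with hV
  have hVmem : ∀ z : ℂ, e * z ∈ V ↔ z ∈ U := by
    intro z
    constructor
    · rintro ⟨z', hz', hzz⟩
      have : z' = z := mul_left_cancel₀ hene hzz
      rwa [← this]
    · intro h; exact ⟨z, h, rfl⟩
  have hsq : v₂ ^ 2 = v₁ ^ 2 := by rcases hpar with rfl | rfl <;> ring
  have hrefl₂ : ∀ z : ℂ, reflLine p₂ v₂ z = reflLine p₂ v₁ z := by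
    intro z; rw [reflLine, reflLine, hsq]
  -- key slice-closure for a generic axis
  have key : ∀ p : ℂ, (∀ z ∈ U, ∀ t : ℝ, 0 ≤ t → t ≤ 1 →
        (t : ℂ) * z + (1 - (t : ℂ)) * reflLine p v₁ z ∈ U) →
      ∀ x y : ℝ, ((x:ℂ) + (y:ℂ) * Complex.I) ∈ V → ∀ s : ℝ,
        |s - (e*p).im| ≤ |y - (e*p).im| → ((x:ℂ) + (s:ℂ) * Complex.I) ∈ V := by
    intro p hconv x y hw s hs
    set c := (e*p).im with hc
    by_cases hyc : y = c
    · have hs0 : s = c := by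
        rw [hyc, sub_self, abs_zero] at hs
        have := abs_nonneg (s - c)
        have : |s - c| = 0 := le_antisymm hs this
        have := abs_eq_zero.mp this
        linarith
      rw [hs0, ← hyc]; exact hw
    · set t : ℝ := (1 + (s - c)/(y - c))/2 with ht
      have hyne : y - c ≠ 0 := sub_ne_zero.mpr hyc
      have hr : |(s-c)/(y-c)| ≤ 1 := by
        rw [abs_div]
        exact div_le_one_of_le₀ hs (abs_nonneg _)
      obtain ⟨hr1, hr2⟩ := abs_le.mp hr
      have ht0 : 0 ≤ t := by rw [ht]; linarith
      have ht1 : t ≤ 1 := by rw [ht]; linarith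
      obtain ⟨z, hzU, hz⟩ := hw
      simp only at hz
      have hP := hconv z hzU t ht0 ht1
      have hPV : e * ((t:ℂ)*z + (1-(t:ℂ))*reflLine p v₁ z) ∈ V :=
        Set.mem_image_of_mem _ hP
      have hid := refl_identity v₁ hv₁ p z e hec
      have h2t : (2*t - 1) * (y - c) = s - c := by
        rw [ht]; field_simp; ring
      have hts : t*y + (1-t)*(2*c - y) = s := by linear_combination h2t
      have htsC : (t:ℂ)*(y:ℂ) + (1-(t:ℂ))*(2*(c:ℂ) - (y:ℂ)) = (s:ℂ) := by
        exact_mod_cast congrArg (Complex.ofReal) hts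
      have heq : e * ((t:ℂ)*z + (1-(t:ℂ))*reflLine p v₁ z)
          = (x:ℂ) + (s:ℂ) * Complex.I := by
        rw [mul_add, show e * ((t:ℂ)*z) = (t:ℂ)*(e*z) by ring,
          show e * ((1-(t:ℂ))*reflLine p v₁ z) = (1-(t:ℂ))*(e * reflLine p v₁ z) by ring,
          hid, hz]
        simp only [map_add, map_mul, Complex.conj_ofReal, Complex.conj_I]
        rw [← hc]
        linear_combination Complex.I * htsC
      rwa [heq] at hPV
  -- slices are full
  have hfull : ∀ w ∈ V, ∀ y : ℝ, ((w.re:ℂ) + (y:ℂ) * Complex.I) ∈ V := by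
    intro w hw y
    have hw' : ((w.re:ℂ) + (w.im:ℂ) * Complex.I) ∈ V := by
      rwa [Complex.re_add_im]
    set S : Set ℝ := {y | ((w.re:ℂ) + (y:ℂ) * Complex.I) ∈ V} with hS
    have h₁ : ∀ y ∈ S, ∀ s : ℝ, |s - c₁| ≤ |y - c₁| → s ∈ S :=
      fun y hy s hs => key p₁ hconv₁ w.re y hy s hs
    have h₂ : ∀ y ∈ S, ∀ s : ℝ, |s - c₂| ≤ |y - c₂| → s ∈ S := by
      intro y hy s hs
      apply key p₂ _ w.re y hy s hs
      intro z hz t h0 h1'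
      rw [← hrefl₂]
      exact hconv₂ z hz t h0 h1'
    rcases hcne.lt_or_gt with h | h
    · exact slice_full_aux S c₁ c₂ h h₁ h₂ w.im hw' y
    · exact slice_full_aux S c₂ c₁ h h₂ h₁ w.im hw' y
  -- the projection
  set A := Complex.re '' V with hA
  have hVopen : IsOpen V := by
    have : V = (fun w => e⁻¹ * w) ⁻¹' U := by
      ext w
      constructor
      · rintro ⟨z, hz, rfl⟩
        simpa [Set.mem_preimage, ← mul_assoc, inv_mul_cancel₀ hene] using hz
      · intro hw
        exact ⟨e⁻¹ * w, hw, by simp [← mul_assoc, mul_inv_cancel₀ hene]⟩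
    rw [this]
    exact hopen.preimage (continuous_const.mul continuous_id)
  have hAopen : IsOpen A := Complex.isOpenMap_re V hVopen
  have hVconn : IsConnected V :=
    hconn.image _ (continuous_const.mul continuous_id).continuousOn
  have hAconn : IsConnected A := hVconn.image _ Complex.continuous_re.continuousOn
  have hVA : ∀ w : ℂ, w ∈ V ↔ w.re ∈ A := by
    intro w
    constructor
    · intro hw; exact ⟨w, hw, rfl⟩
    · rintro ⟨w', hw', hre⟩
      have := hfull w' hw' w.im
      rw [hre, Complex.re_add_im] at this
      exact this
  obtain ⟨a, b, hat, hbb, hab, hiff⟩ :=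
    open_conn_interval A hAopen hAconn.isPreconnected hAconn.nonempty
  refine ⟨θ, a, b, hat, hbb, hab, ?_⟩
  ext z
  simp only [Set.mem_setOf_eq]
  rw [← hVmem z, hVA (e * z)]
  exact hiff ((e*z).re)
end

section
/- Let U ⊆ ℂ be a nonempty open connected set which is not of the form {z ∈ ℂ : a < Re(e^{−iθ} z) < b} for any θ ∈ ℝ, a ∈ [−∞, ∞), b ∈ (−∞, ∞] (i.e. U is not all of ℂ, not an open half-plane, and not an open infinite strip). Suppose U has at least two distinct symmetry axes with respect to each of which U is Δ-convex. Then there exists a unique point p ∈ ℂ such that p lies on every symmetry axis L of U for which U is L-convex. -/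
/-- The line through `p` with unit direction `v` is a symmetry axis of `U` with respect to
which `U` is `Δ`-convex: the reflection over the line maps `U` onto `U`, and for each
`z ∈ U` the segment joining `z` to its reflection stays in `U`. -/
def IsConvexSymmAxis (U : Set ℂ) (p v : ℂ) : Prop :=
  ‖v‖ = 1 ∧ reflLine p v '' U = U ∧
  ∀ z ∈ U, ∀ t : ℝ, 0 ≤ t → t ≤ 1 →
    (t : ℂ) * z + (1 - (t : ℂ)) * reflLine p v z ∈ U

open Complex ComplexConjugate

lemma unit_axis {U : Set ℂ} {p v : ℂ} (h : IsConvexSymmAxis U p v) : v * conj v = 1 := by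
  rw [Complex.mul_conj]
  norm_cast
  rw [Complex.normSq_eq_norm_sq, h.1, one_pow]

lemma refl_refl (p v z : ℂ) (hv : v * conj v = 1) :
    reflLine p v (reflLine p v z) = z := by
  simp only [reflLine, map_add, map_sub, map_mul, Complex.conj_conj, map_pow]
  ring_nf
  linear_combination (z - p) * (v * conj v + 1) * hv

lemma mem_line_iff_fixed (p v z : ℂ) (hv : v * conj v = 1) :
    z ∈ lineThrough p v ↔ reflLine p v z = z := by
  constructor
  · rintro ⟨t, rfl⟩
    simp only [reflLine, add_sub_cancel_left, map_mul, Complex.conj_ofReal]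
    linear_combination (t : ℂ) * v * hv
  · intro h
    refine ⟨((z - p) * conj v).re, ?_⟩
    have h2 : v ^ 2 * conj (z - p) = z - p := by
      have := h; simp only [reflLine] at this; linear_combination this
    have him : ((z - p) * conj v).im = 0 := by
      have hcc : conj ((z - p) * conj v) = (z - p) * conj v := by
        simp only [map_mul, Complex.conj_conj]
        linear_combination conj v * h2 - v * conj (z - p) * hv
      exact Complex.conj_eq_iff_im.mp hcc
    have hre : ((((z - p) * conj v).re : ℝ) : ℂ) = (z - p) * conj v := by
      rw [← Complex.re_add_im ((z - p) * conj v), him]; simp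
    rw [hre]
    linear_combination -(z - p) * hv

lemma mem_iff_refl {U : Set ℂ} {p v : ℂ} (h : IsConvexSymmAxis U p v) (z : ℂ) :
    z ∈ U ↔ reflLine p v z ∈ U := by
  have hv := unit_axis h
  constructor
  · intro hz
    rw [← h.2.1]; exact ⟨z, hz, rfl⟩
  · intro hz
    have : reflLine p v (reflLine p v z) ∈ reflLine p v '' U := ⟨_, hz, rfl⟩
    rwa [refl_refl p v z hv, h.2.1] at this

lemma line_eq_two (p v x y : ℂ) (hv : v ≠ 0) (hx : x ∈ lineThrough p v)
    (hy : y ∈ lineThrough p v) (hxy : x ≠ y) :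
    lineThrough p v = {z : ℂ | ∃ r : ℝ, z = x + (r : ℂ) * (y - x)} := by
  obtain ⟨t, rfl⟩ := hx
  obtain ⟨u, rfl⟩ := hy
  have hut : u ≠ t := by rintro rfl; exact hxy rfl
  have hutc : ((u : ℂ) - (t : ℂ)) ≠ 0 := by
    exact_mod_cast sub_ne_zero.mpr (fun hh => hut (by exact_mod_cast hh))
  ext z
  simp only [lineThrough, Set.mem_setOf_eq]
  constructor
  · rintro ⟨r, rfl⟩
    refine ⟨(r - t) / (u - t), ?_⟩
    push_cast
    field_simp
    ring
  · rintro ⟨r, rfl⟩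
    exact ⟨t + r * (u - t), by push_cast; ring⟩
lemma stripCase (U : Set ℂ) (hne : U.Nonempty) (hopen : IsOpen U) (hconn : IsConnected U)
    (p v c : ℂ) (h : IsConvexSymmAxis U p v) (hc : c ≠ 0)
    (hperp : v ^ 2 * conj c = -c)
    (htrans : ∀ z, z ∈ U ↔ z + c ∈ U) :
    ∃ (θ : ℝ) (a b : EReal), a ≠ ⊤ ∧ b ≠ ⊥ ∧
      U = {z : ℂ | a < ((Complex.exp (-(θ : ℂ) * Complex.I) * z).re : EReal) ∧
        ((Complex.exp (-(θ : ℂ) * Complex.I) * z).re : EReal) < b} := by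
  have hv : v * conj v = 1 := unit_axis h
  have hvne : v ≠ 0 := by rintro rfl; simp at hv
  -- write c = s * I * v with s real nonzero
  obtain ⟨s, hs0, hcs⟩ : ∃ s : ℝ, s ≠ 0 ∧ c = (s:ℂ) * I * v := by
    set d : ℂ := conj v * c with hd
    have hdconj : conj d = -d := by
      have : v * conj d = v * (-d) := by
        simp only [hd, map_mul, Complex.conj_conj]
        linear_combination hperp + c * hv
      exact mul_left_cancel₀ hvne this
    have hdre : d.re = 0 := by
      have h1 : d.re = -d.re := by
        conv_lhs => rw [← Complex.conj_re d]
        rw [hdconj, Complex.neg_re]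
      linarith
    refine ⟨d.im, ?_, ?_⟩
    · intro h0
      have : d = 0 := Complex.ext (by simp [hdre]) (by simp [h0])
      have : c = 0 := by
        have hcd : v * d = c := by
          simp only [hd]; linear_combination c * hv
        rw [this, mul_zero] at hcd; exact hcd.symm
      exact hc this
    · have hdeq : d = (d.im : ℂ) * I := by
        rw [← Complex.re_add_im d, hdre]; simp
      have hcd : v * d = c := by simp only [hd]; linear_combination c * hv
      conv_lhs => rw [← hcd, hdeq]
      ring
  -- coordinates
  set e : ℝ → ℝ → ℂ := fun x y => p + v * ((x:ℂ) + (y:ℂ) * I) with he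
  have hdec : ∀ z : ℂ, z = e ((conj v * (z - p)).re) ((conj v * (z - p)).im) := by
    intro z
    simp only [he]
    rw [Complex.re_add_im (conj v * (z - p))]
    linear_combination -(z-p) * hv
  have hrefl : ∀ x y : ℝ, reflLine p v (e x y) = e x (-y) := by
    intro x y
    simp only [he, reflLine, add_sub_cancel_left, map_add, map_mul, Complex.conj_ofReal,
      Complex.conj_I]
    push_cast
    linear_combination v * ((x:ℂ) - (y:ℂ)*I) * hv
  have hseg : ∀ x y : ℝ, e x y ∈ U → ∀ y' : ℝ, |y'| ≤ |y| → e x y' ∈ U := by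
    intro x y hxy y' hle
    by_cases hy : y = 0
    · have hy' : y' = 0 := by
        rw [hy, abs_zero] at hle
        exact abs_nonpos_iff.mp hle
      rw [hy']; rw [hy] at hxy; exact hxy
    · set t : ℝ := (y'/y + 1)/2 with ht
      have hd1 : |y'/y| ≤ 1 := by
        rw [abs_div]
        rw [div_le_one (abs_pos.mpr hy)]
        exact hle
      have habs := abs_le.mp hd1
      have ht0 : 0 ≤ t := by rw [ht]; linarith [habs.1]
      have ht1 : t ≤ 1 := by rw [ht]; linarith [habs.2]
      have key := h.2.2 (e x y) hxy t ht0 ht1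
      rw [hrefl] at key
      have heq : (t : ℂ) * (e x y) + (1 - (t : ℂ)) * (e x (-y)) = e x y' := by
        simp only [he, ht]
        have hyc : (y : ℂ) ≠ 0 := by exact_mod_cast hy
        push_cast
        field_simp
        ring
      rwa [heq] at key
  have hstep : ∀ x y : ℝ, e x y ∈ U ↔ e x (y + s) ∈ U := by
    intro x y
    have : e x y + c = e x (y + s) := by
      simp only [he, hcs]; push_cast; ring
    rw [← this]; exact htrans _
  have hup : ∀ x y : ℝ, e x y ∈ U → ∀ n : ℕ, e x (y + n*s) ∈ U := by
    intro x y hxy n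
    induction n with
    | zero => simpa using hxy
    | succ k ih =>
        have := (hstep x (y + k*s)).mp ih
        have harg : y + (k:ℝ)*s + s = y + ((k:ℕ)+1 : ℕ)*s := by push_cast; ring
        rwa [harg] at this
  have hfull : ∀ x y : ℝ, e x y ∈ U → ∀ y' : ℝ, e x y' ∈ U := by
    intro x y hxy y'
    obtain ⟨n, hn⟩ := exists_nat_ge ((|y'| + |y|)/|s|)
    have hspos : (0:ℝ) < |s| := abs_pos.mpr hs0
    have hns : |y'| + |y| ≤ n * |s| := by
      rw [div_le_iff₀ hspos] at hn; linarith
    apply hseg x (y + n*s) (hup x y hxy n) y'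
    have h1 : |(n:ℝ)*s| ≤ |y + n*s| + |y| := by
      have := abs_add_le (y + (n:ℝ)*s) (-y)
      simpa using this
    have h2 : |(n:ℝ)*s| = n*|s| := by
      rw [abs_mul, Nat.abs_cast]
    linarith
  -- X coordinate
  set X : ℂ → ℝ := fun z => (conj v * z).re with hXdef
  have hXcont : Continuous X := by
    exact Complex.continuous_re.comp (continuous_const.mul continuous_id)
  have hsame : ∀ z ∈ U, ∀ w : ℂ, X w = X z → w ∈ U := by
    intro z hz w hXw
    have hco : ∀ u : ℂ, (conj v * (u - p)).re = X u - X p := by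
      intro u; simp [hXdef, mul_sub, Complex.sub_re]
    have hzU : e ((conj v * (z - p)).re) ((conj v * (z - p)).im) ∈ U := by
      rw [← hdec z]; exact hz
    have hxx : (conj v * (w - p)).re = (conj v * (z - p)).re := by
      rw [hco, hco, hXw]
    rw [hdec w, hxx]
    exact hfull _ _ hzU _
  set A' : Set EReal := (fun z : ℂ => ((X z : ℝ) : EReal)) '' U with hA'
  set a : EReal := sInf A' with ha
  set b : EReal := sSup A' with hb
  obtain ⟨z₀, hz₀⟩ := hne
  have haT : a ≠ ⊤ := by
    have : a ≤ ((X z₀ : ℝ) : EReal) := sInf_le ⟨z₀, hz₀, rfl⟩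
    exact (this.trans_lt (EReal.coe_lt_top _)).ne
  have hbB : b ≠ ⊥ := by
    have : ((X z₀ : ℝ) : EReal) ≤ b := le_sSup ⟨z₀, hz₀, rfl⟩
    exact ((EReal.bot_lt_coe _).trans_le this).ne'
  have hexp : Complex.exp (-(v.arg : ℂ) * I) = conj v := by
    have h1 : Complex.exp ((v.arg:ℂ) * I) = v := by
      have := Complex.norm_mul_exp_arg_mul_I v
      rwa [h.1, Complex.ofReal_one, one_mul] at this
    have h2 : (-(v.arg : ℂ) * I) = conj ((v.arg:ℂ) * I) := by
      simp [map_mul, Complex.conj_ofReal, Complex.conj_I]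
    rw [h2, Complex.exp_conj, h1]
  -- ordConnected image
  have hAr : ((X '' U) : Set ℝ).OrdConnected := by
    have : IsPreconnected (X '' U) := (hconn.image X hXcont.continuousOn).isPreconnected
    exact this.ordConnected
  refine ⟨v.arg, a, b, haT, hbB, ?_⟩
  ext z
  simp only [Set.mem_setOf_eq, hexp]
  constructor
  · intro hz
    obtain ⟨ε, hε, hball⟩ := Metric.isOpen_iff.mp hopen z hz
    have hmem : ∀ r : ℝ, |r| < ε → z + (r:ℂ)*v ∈ U := by
      intro r hr
      apply hball
      rw [Metric.mem_ball, Complex.dist_eq]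
      simp only [add_sub_cancel_left]
      rw [norm_mul, Complex.norm_real, Real.norm_eq_abs, h.1, mul_one]
      exact hr
    have hXr : ∀ r : ℝ, X (z + (r:ℂ)*v) = X z + r := by
      intro r
      have hmul : conj v * (z + (r:ℂ)*v) = conj v * z + (r:ℂ) := by
        linear_combination (r:ℂ) * hv
      simp only [hXdef]
      rw [hmul, Complex.add_re, Complex.ofReal_re]
    constructor
    · have hmem1 := hmem (-(ε/2)) (by rw [abs_neg, abs_of_pos (by linarith)]; linarith)
      have hle : a ≤ ((X (z + ((-(ε/2):ℝ):ℂ)*v) : ℝ) : EReal) := sInf_le ⟨_, hmem1, rfl⟩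
      have : X (z + ((-(ε/2):ℝ):ℂ)*v) = X z - ε/2 := by rw [hXr]; ring
      rw [this] at hle
      refine hle.trans_lt ?_
      exact_mod_cast EReal.coe_lt_coe_iff.mpr (by linarith)
    · have hmem2 := hmem (ε/2) (by rw [abs_of_pos (by linarith)]; linarith)
      have hle : ((X (z + ((ε/2:ℝ):ℂ)*v) : ℝ) : EReal) ≤ b := le_sSup ⟨_, hmem2, rfl⟩
      have : X (z + ((ε/2:ℝ):ℂ)*v) = X z + ε/2 := hXr _
      rw [this] at hle
      refine lt_of_lt_of_le ?_ hle
      exact_mod_cast EReal.coe_lt_coe_iff.mpr (by linarith)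
  · rintro ⟨haz, hbz⟩
    obtain ⟨r₁, hr₁A, hr₁lt⟩ := sInf_lt_iff.mp haz
    obtain ⟨z₁, hz₁, rfl⟩ := hr₁A
    obtain ⟨r₂, hr₂A, hr₂gt⟩ := lt_sSup_iff.mp hbz
    obtain ⟨z₂, hz₂, rfl⟩ := hr₂A
    have h1 : X z₁ ≤ X z := (EReal.coe_lt_coe_iff.mp hr₁lt).le
    have h2 : X z ≤ X z₂ := (EReal.coe_lt_coe_iff.mp hr₂gt).le
    have : X z ∈ X '' U := hAr.out ⟨z₁, hz₁, rfl⟩ ⟨z₂, hz₂, rfl⟩ ⟨h1, h2⟩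
    obtain ⟨z₃, hz₃, hXz₃⟩ := this
    exact hsame z₃ hz₃ z hXz₃.symm

/-- If a nonempty domain `U ⊆ ℂ` is not `ℂ`, a half-plane or a strip, and has at least
two distinct symmetry axes with respect to each of which it is `Δ`-convex, then there is a
unique point lying on every such axis. -/
theorem convex_symmetry_axes_concurrent (U : Set ℂ) (hne : U.Nonempty)
    (hopen : IsOpen U) (hconn : IsConnected U)
    (hnotstrip : ¬ ∃ (θ : ℝ) (a b : EReal), a ≠ ⊤ ∧ b ≠ ⊥ ∧
      U = {z : ℂ | a < ((Complex.exp (-(θ : ℂ) * Complex.I) * z).re : EReal) ∧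
        ((Complex.exp (-(θ : ℂ) * Complex.I) * z).re : EReal) < b})
    (p₁ v₁ p₂ v₂ : ℂ)
    (h₁ : IsConvexSymmAxis U p₁ v₁) (h₂ : IsConvexSymmAxis U p₂ v₂)
    (hdist : lineThrough p₁ v₁ ≠ lineThrough p₂ v₂) :
    ∃! q : ℂ, ∀ p v : ℂ, IsConvexSymmAxis U p v → q ∈ lineThrough p v := by
  have hv1 : v₁ * conj v₁ = 1 := unit_axis h₁
  have hv2 : v₂ * conj v₂ = 1 := unit_axis h₂
  have hv1ne : v₁ ≠ 0 := by rintro rfl; simp at hv1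
  have hv2ne : v₂ ≠ 0 := by rintro rfl; simp at hv2
  by_cases hpar : v₁ ^ 2 = v₂ ^ 2
  · -- parallel axes: U is a strip, contradiction
    exfalso
    have hparc : (conj v₁) ^ 2 = (conj v₂) ^ 2 := by
      rw [← map_pow, ← map_pow, hpar]
    have hv2sq : v₂ ^ 2 * (conj v₂) ^ 2 = 1 := by
      linear_combination (v₂ * conj v₂ + 1) * hv2
    have hcomp : ∀ z, reflLine p₂ v₂ (reflLine p₁ v₁ z) =
        z + reflLine p₂ v₂ (reflLine p₁ v₁ 0) := by
      intro z
      simp only [reflLine, map_add, map_sub, map_mul, map_pow, Complex.conj_conj, map_zero]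
      rw [hparc]
      linear_combination z * hv2sq
    have hcperp : v₁ ^ 2 * conj (reflLine p₂ v₂ (reflLine p₁ v₁ 0)) =
        -(reflLine p₂ v₂ (reflLine p₁ v₁ 0)) := by
      simp only [reflLine, map_add, map_sub, map_mul, map_pow, Complex.conj_conj, map_zero]
      rw [hpar, hparc]
      linear_combination -(v₂ ^ 2 * conj p₁ + p₂) * hv2sq
    have hcne : reflLine p₂ v₂ (reflLine p₁ v₁ 0) ≠ 0 := by
      intro h0
      apply hdist
      have hσeq : ∀ z, reflLine p₂ v₂ z = reflLine p₁ v₁ z := by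
        intro z
        have := hcomp (reflLine p₁ v₁ z)
        rwa [refl_refl p₁ v₁ z hv1, h0, add_zero] at this
      ext z
      simp only [mem_line_iff_fixed p₁ v₁ z hv1, mem_line_iff_fixed p₂ v₂ z hv2, hσeq]
    have htrans : ∀ z, z ∈ U ↔ z + reflLine p₂ v₂ (reflLine p₁ v₁ 0) ∈ U := by
      intro z
      rw [mem_iff_refl h₁ z, mem_iff_refl h₂ (reflLine p₁ v₁ z), hcomp]
    exact hnotstrip (stripCase U hne hopen hconn p₁ v₁ _ h₁ hcne hcperp htrans)
  · -- non-parallel axes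
    have hone : (1 : ℂ) - v₂ ^ 2 * (conj v₁) ^ 2 ≠ 0 := by
      rw [sub_ne_zero]
      intro h0
      exact hpar (by linear_combination -v₁ ^ 2 * h0.symm + v₂ ^ 2 * (v₁ * conj v₁ + 1) * hv1)
    set q : ℂ := (reflLine p₂ v₂ (reflLine p₁ v₁ 0)) / (1 - v₂ ^ 2 * (conj v₁) ^ 2) with hqdef
    have hq : q * (1 - v₂ ^ 2 * (conj v₁) ^ 2) = reflLine p₂ v₂ (reflLine p₁ v₁ 0) := by
      rw [hqdef]; exact div_mul_cancel₀ _ hone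
    have hρ : ∀ z, reflLine p₂ v₂ (reflLine p₁ v₁ z) =
        q + (v₂ ^ 2 * (conj v₁) ^ 2) * (z - q) := by
      intro z
      have h0 : reflLine p₂ v₂ (reflLine p₁ v₁ z) =
          reflLine p₂ v₂ (reflLine p₁ v₁ 0) + (v₂ ^ 2 * (conj v₁) ^ 2) * z := by
        simp only [reflLine, map_add, map_sub, map_mul, map_pow, Complex.conj_conj, map_zero]
        ring
      rw [h0]
      linear_combination -hq
    have hρq : reflLine p₂ v₂ (reflLine p₁ v₁ q) = q := by
      rw [hρ q, sub_self, mul_zero, add_zero]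
    -- every convex symmetry axis passes through q
    have key : ∀ P V : ℂ, IsConvexSymmAxis U P V → reflLine P V q = q := by
      intro P V hax
      by_contra hne'
      have hV : V * conj V = 1 := unit_axis hax
      have hVsq : V ^ 2 * (conj V) ^ 2 = 1 := by
        linear_combination (V * conj V + 1) * hV
      have hu : (V ^ 2 * (conj v₂) ^ 2 * v₁ ^ 2) * ((conj V) ^ 2 * v₂ ^ 2 * (conj v₁) ^ 2)
          = 1 := by
        linear_combination ((V * conj V) ^ 2 * (v₂ * conj v₂) ^ 2 * (v₁ * conj v₁ + 1)) * hv1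
          + ((V * conj V) ^ 2 * (v₂ * conj v₂ + 1)) * hv2 + (V * conj V + 1) * hV
      have hNform : ∀ z, reflLine P V (reflLine p₂ v₂ (reflLine p₁ v₁ z)) =
          reflLine P V (reflLine p₂ v₂ (reflLine p₁ v₁ 0))
            + (V ^ 2 * (conj v₂) ^ 2 * v₁ ^ 2) * conj z := by
        intro z
        simp only [reflLine, map_add, map_sub, map_mul, map_pow, Complex.conj_conj, map_zero]
        ring
      set w : ℂ := reflLine P V (reflLine p₂ v₂ (reflLine p₁ v₁ 0))
        + (V ^ 2 * (conj v₂) ^ 2 * v₁ ^ 2)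
          * conj (reflLine P V (reflLine p₂ v₂ (reflLine p₁ v₁ 0))) with hwdef
      have hNN : ∀ z, reflLine P V (reflLine p₂ v₂ (reflLine p₁ v₁
          (reflLine P V (reflLine p₂ v₂ (reflLine p₁ v₁ z))))) = z + w := by
        intro z
        rw [hNform (reflLine P V (reflLine p₂ v₂ (reflLine p₁ v₁ z))), hNform z]
        simp only [map_add, map_mul, map_pow, Complex.conj_conj]
        rw [hwdef]
        linear_combination z * hu
      -- invariance of U under translation by w
      have hT : ∀ z, z ∈ U ↔ z + w ∈ U := by
        intro z
        calc z ∈ U ↔ reflLine p₁ v₁ z ∈ U := mem_iff_refl h₁ z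
          _ ↔ reflLine p₂ v₂ (reflLine p₁ v₁ z) ∈ U := mem_iff_refl h₂ _
          _ ↔ reflLine P V (reflLine p₂ v₂ (reflLine p₁ v₁ z)) ∈ U := mem_iff_refl hax _
          _ ↔ reflLine p₁ v₁ (reflLine P V (reflLine p₂ v₂ (reflLine p₁ v₁ z))) ∈ U :=
              mem_iff_refl h₁ _
          _ ↔ reflLine p₂ v₂ (reflLine p₁ v₁
                (reflLine P V (reflLine p₂ v₂ (reflLine p₁ v₁ z)))) ∈ U := mem_iff_refl h₂ _
          _ ↔ reflLine P V (reflLine p₂ v₂ (reflLine p₁ v₁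
                (reflLine P V (reflLine p₂ v₂ (reflLine p₁ v₁ z))))) ∈ U := mem_iff_refl hax _
          _ ↔ z + w ∈ U := by rw [hNN z]
      -- w is nonzero
      have hNq : reflLine P V (reflLine p₂ v₂ (reflLine p₁ v₁ q)) = reflLine P V q := by
        rw [hρq]
      have hrq : conj (reflLine P V q - q) = -(conj V) ^ 2 * (reflLine P V q - q) := by
        simp only [reflLine, map_add, map_sub, map_mul, map_pow, Complex.conj_conj]
        linear_combination (conj q - conj P) * hVsq
      have hNNq : reflLine P V (reflLine p₂ v₂ (reflLine p₁ v₁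
          (reflLine P V (reflLine p₂ v₂ (reflLine p₁ v₁ q))))) =
          q + (reflLine P V q - q) * (1 - (conj v₂) ^ 2 * v₁ ^ 2) := by
        rw [hNq, hρ (reflLine P V q)]
        have h1 : reflLine P V (q + (v₂ ^ 2 * (conj v₁) ^ 2) * (reflLine P V q - q)) =
            reflLine P V q + V ^ 2 * ((conj v₂) ^ 2 * v₁ ^ 2 * conj (reflLine P V q - q)) := by
          simp only [reflLine, map_add, map_sub, map_mul, map_pow, Complex.conj_conj]
          ring
        rw [h1, hrq]
        linear_combination -((conj v₂) ^ 2 * v₁ ^ 2) * (reflLine P V q - q) * hVsq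
      have hwval : w = (reflLine P V q - q) * (1 - (conj v₂) ^ 2 * v₁ ^ 2) := by
        have h2 := hNN q
        rw [hNNq] at h2
        linear_combination -h2
      have hw0 : w ≠ 0 := by
        rw [hwval]
        apply mul_ne_zero (sub_ne_zero.mpr hne')
        rw [sub_ne_zero]
        intro h0
        exact hpar (by linear_combination v₂ ^ 2 * h0.symm - v₁ ^ 2 * (v₂ * conj v₂ + 1) * hv2)
      -- finishing move: a perpendicular translation gives a strip
      have finish : ∀ P' V' : ℂ, IsConvexSymmAxis U P' V' → V' ^ 2 * conj w ≠ w → False := by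
        intro P' V' hax' hVw
        have hV' : V' * conj V' = 1 := unit_axis hax'
        have hV'sq : V' ^ 2 * (conj V') ^ 2 = 1 := by
          linear_combination (V' * conj V' + 1) * hV'
        have hw'0 : w - V' ^ 2 * conj w ≠ 0 := sub_ne_zero.mpr (Ne.symm hVw)
        have hperp' : V' ^ 2 * conj (w - V' ^ 2 * conj w) = -(w - V' ^ 2 * conj w) := by
          simp only [map_sub, map_mul, map_pow, Complex.conj_conj]
          linear_combination -w * hV'sq
        have hb' : ∀ z, z ∈ U ↔ z + V' ^ 2 * conj w ∈ U := by
          intro z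
          have hh1 : z ∈ U ↔ reflLine P' V' z ∈ U := mem_iff_refl hax' z
          have hh2 : reflLine P' V' z ∈ U ↔ reflLine P' V' z + w ∈ U := hT _
          have hh3 : reflLine P' V' z + w ∈ U ↔
              reflLine P' V' (reflLine P' V' z + w) ∈ U := mem_iff_refl hax' _
          have hh4 : reflLine P' V' (reflLine P' V' z + w) = z + V' ^ 2 * conj w := by
            have hinv := refl_refl P' V' z hV'
            simp only [reflLine, map_add, map_sub, map_mul, map_pow, Complex.conj_conj]
              at hinv ⊢
            linear_combination hinv
          rw [hh4] at hh3
          exact (hh1.trans hh2).trans hh3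
        have htransw' : ∀ z, z ∈ U ↔ z + (w - V' ^ 2 * conj w) ∈ U := by
          intro z
          have hh1 := hT z
          have hh2 := (hb' (z + (w - V' ^ 2 * conj w))).symm
          have harg : z + (w - V' ^ 2 * conj w) + V' ^ 2 * conj w = z + w := by ring
          rw [harg] at hh2
          exact hh1.trans hh2
        exact hnotstrip (stripCase U hne hopen hconn P' V' _ hax' hw'0 hperp' htransw')
      by_cases hw1 : v₁ ^ 2 * conj w = w
      · have hw2 : v₂ ^ 2 * conj w ≠ w := by
          intro h2w
          apply hpar
          have hcw : conj w ≠ 0 := fun h => hw0 (by rw [← Complex.conj_conj w, h, map_zero])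
          exact mul_right_cancel₀ hcw (hw1.trans h2w.symm)
        exact finish p₂ v₂ h₂ hw2
      · exact finish p₁ v₁ h₁ hw1
    refine ⟨q, ?_, ?_⟩
    · intro P V hax
      exact (mem_line_iff_fixed P V q (unit_axis hax)).mpr (key P V hax)
    · intro y hy
      have hq1 : q ∈ lineThrough p₁ v₁ := (mem_line_iff_fixed _ _ _ hv1).mpr (key p₁ v₁ h₁)
      have hq2 : q ∈ lineThrough p₂ v₂ := (mem_line_iff_fixed _ _ _ hv2).mpr (key p₂ v₂ h₂)
      have hy1 := hy p₁ v₁ h₁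
      have hy2 := hy p₂ v₂ h₂
      by_contra hyq
      apply hdist
      rw [line_eq_two p₁ v₁ y q hv1ne hy1 hq1 hyq, line_eq_two p₂ v₂ y q hv2ne hy2 hq2 hyq]
end

section
/- Let θ ∈ (0, π/3], and let T ⊆ ℂ be the interior of the convex hull of the three points −1, 1, and i·tan θ (the open isosceles triangle with base angles θ). Let B be the interior angle bisector at the vertex 1, i.e. the line through 1 with direction e^{i(π − θ/2)}, so that reflection over B is the map σ(z) = 1 + e^{−iθ}·conj(z − 1), and the open side of B containing the apex i·tan θ is {z : Im((z − 1)·e^{iθ/2}) > 0}. Then for every z ∈ T with Im((z − 1)·e^{iθ/2}) > 0, the reflected point 1 + e^{−iθ}·conj(z − 1) lies in T. In other words, for θ ≤ π/3 the angle bisector B is a partial symmetry axis of T whose symmetric side is the component of T ∖ B adjacent to the shorter side (the leg) of the triangle. -/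
private lemma lin2' (t : ℝ) : IsLinearMap ℝ (fun z : ℂ => t * z.re + z.im) :=
  ⟨fun a b => by simp [Complex.add_re, Complex.add_im]; ring,
   fun c a => by simp [Complex.smul_re, Complex.smul_im]; ring⟩

private lemma lin3' (t : ℝ) : IsLinearMap ℝ (fun z : ℂ => -t * z.re + z.im) :=
  ⟨fun a b => by simp [Complex.add_re, Complex.add_im]; ring,
   fun c a => by simp [Complex.smul_re, Complex.smul_im]; ring⟩

private lemma tri_hull (t : ℝ) (ht : 0 < t) :
    convexHull ℝ ({-1, 1, (t : ℂ) * Complex.I} : Set ℂ) =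
      {z : ℂ | 0 ≤ z.im ∧ t * z.re + z.im ≤ t ∧ -t * z.re + z.im ≤ t} := by
  apply Set.Subset.antisymm
  · apply convexHull_min
    · rintro p (rfl | rfl | rfl) <;> refine ⟨?_, ?_, ?_⟩ <;> simp <;> linarith
    · exact ((convex_halfSpace_ge ⟨fun a b => Complex.add_im a b, fun c a => by simp⟩ 0).inter
        ((convex_halfSpace_le (lin2' t) t).inter (convex_halfSpace_le (lin3' t) t)))
  · rintro z ⟨h1, h2, h3⟩
    have hsub : ∀ p ∈ ({-1, 1, (t : ℂ) * Complex.I} : Set ℂ),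
        p ∈ convexHull ℝ ({-1, 1, (t : ℂ) * Complex.I} : Set ℂ) :=
      fun p hp => subset_convexHull ℝ _ hp
    have hmem := (convex_convexHull ℝ ({-1, 1, (t : ℂ) * Complex.I} : Set ℂ)).sum_mem
      (t := (Finset.univ : Finset (Fin 3)))
      (w := ![(t - t * z.re - z.im) / (2 * t), (t + t * z.re - z.im) / (2 * t), z.im / t])
      (z := ![-1, 1, (t : ℂ) * Complex.I])
      (by
        intro i _
        fin_cases i
        · exact div_nonneg (by linarith) (by linarith)
        · exact div_nonneg (by linarith) (by linarith)
        · exact div_nonneg h1 ht.le)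
      (by
        simp [Fin.sum_univ_three]
        field_simp
        ring)
      (by
        intro i _
        fin_cases i <;> exact hsub _ (by simp))
    convert hmem using 1
    obtain ⟨x, y⟩ := z
    simp only [Fin.sum_univ_three, Matrix.cons_val_zero, Matrix.cons_val_one, Matrix.head_cons,
      Matrix.cons_val_two, Matrix.tail_cons, Complex.real_smul] at *
    rw [Complex.mk_eq_add_mul_I]
    push_cast
    have htc : (t : ℂ) ≠ 0 := by exact_mod_cast ht.ne'
    field_simp
    ring

private lemma tri_interior (t : ℝ) (ht : 0 < t) :
    interior (convexHull ℝ ({-1, 1, (t : ℂ) * Complex.I} : Set ℂ)) =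
      {z : ℂ | 0 < z.im ∧ t * z.re + z.im < t ∧ -t * z.re + z.im < t} := by
  rw [tri_hull t ht]
  apply Set.Subset.antisymm
  · intro z hz
    rw [mem_interior_iff_mem_nhds, Metric.mem_nhds_iff] at hz
    obtain ⟨ε, hε, hball⟩ := hz
    have key : ∀ w : ℂ, ‖w‖ < ε →
        0 ≤ (z + w).im ∧ t * (z + w).re + (z + w).im ≤ t ∧ -t * (z + w).re + (z + w).im ≤ t := by
      intro w hw
      have : z + w ∈ Metric.ball z ε := by
        rw [Metric.mem_ball, Complex.dist_eq, add_sub_cancel_left]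
        exact hw
      exact hball this
    have h1 := key (-(↑(ε / 2) * Complex.I)) (by simp [abs_of_pos hε]; linarith)
    have h2 := key (↑(ε / 2) * Complex.I) (by simp [abs_of_pos hε]; linarith)
    simp [Complex.add_re, Complex.add_im] at h1 h2
    refine ⟨by linarith [h1.1], by linarith [h2.2.1], by linarith [h2.2.2]⟩
  · apply interior_maximal
    · rintro z ⟨a, b, c⟩
      exact ⟨a.le, b.le, c.le⟩
    · have : {z : ℂ | 0 < z.im ∧ t * z.re + z.im < t ∧ -t * z.re + z.im < t} =
          {z : ℂ | 0 < z.im} ∩ ({z : ℂ | t * z.re + z.im < t} ∩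
            {z : ℂ | -t * z.re + z.im < t}) := rfl
      rw [this]
      exact (isOpen_lt continuous_const Complex.continuous_im).inter
        ((isOpen_lt (by fun_prop) continuous_const).inter
          (isOpen_lt (by fun_prop) continuous_const))

/-- For `θ ∈ (0, π/3]`, the interior angle bisector at the vertex `1` of the open isosceles
triangle `T` with vertices `-1`, `1`, `i tan θ` is a partial symmetry axis of `T`: every
point of `T` on the apex side of the bisector reflects over it back into `T`, where the
reflection is `z ↦ 1 + e^{-iθ} conj (z - 1)`. -/
theorem isosceles_bisector_partial_symmetry (θ : ℝ) (hθ0 : 0 < θ)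
    (hθ : θ ≤ Real.pi / 3) (z : ℂ)
    (hz : z ∈ interior (convexHull ℝ ({-1, 1, (Real.tan θ : ℂ) * Complex.I} : Set ℂ)))
    (hside : 0 < ((z - 1) * Complex.exp (((θ : ℂ) / 2) * Complex.I)).im) :
    1 + Complex.exp (-(θ : ℂ) * Complex.I) * (starRingEnd ℂ) (z - 1) ∈
      interior (convexHull ℝ ({-1, 1, (Real.tan θ : ℂ) * Complex.I} : Set ℂ)) := by
  have hθπ2 : θ < Real.pi / 2 := lt_of_le_of_lt hθ (by linarith [Real.pi_pos])
  have hcpos : 0 < Real.cos θ := Real.cos_pos_of_mem_Ioo ⟨by linarith, hθπ2⟩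
  have hspos : 0 < Real.sin θ :=
    Real.sin_pos_of_pos_of_lt_pi hθ0 (by linarith [Real.pi_pos])
  have ht : 0 < Real.tan θ := Real.tan_pos_of_pos_of_lt_pi_div_two hθ0 hθπ2
  have hc2pos : 0 < Real.cos (θ / 2) := Real.cos_pos_of_mem_Ioo ⟨by linarith, by linarith⟩
  have hs2pos : 0 < Real.sin (θ / 2) :=
    Real.sin_pos_of_pos_of_lt_pi (by linarith) (by linarith [Real.pi_pos])
  rw [tri_interior _ ht] at hz ⊢
  obtain ⟨h1, h2, h3⟩ := hz
  set x := z.re with hx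
  set y := z.im with hy
  set c := Real.cos θ with hcdef
  set s := Real.sin θ with hsdef
  set c2 := Real.cos (θ / 2) with hc2def
  set s2 := Real.sin (θ / 2) with hs2def
  -- basic trig identities
  have hct : c * Real.tan θ = s := by
    rw [Real.tan_eq_sin_div_cos, ← hsdef, ← hcdef]
    field_simp [hcpos.ne']
  have hhalf_s : s = 2 * s2 * c2 := by
    rw [hsdef, hs2def, hc2def, show θ = 2 * (θ / 2) by ring, Real.sin_two_mul]
    ring_nf
  have hhalf_c : c = 2 * c2 ^ 2 - 1 := by
    have h := Real.cos_two_mul (θ / 2)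
    rw [show 2 * (θ / 2) = θ by ring] at h
    rw [hcdef, hc2def, h]
  have hpy2 : s2 ^ 2 + c2 ^ 2 = 1 := Real.sin_sq_add_cos_sq (θ / 2)
  have hchalf : 1 / 2 ≤ c := by
    have := Real.cos_le_cos_of_nonneg_of_le_pi hθ0.le
      (by linarith [Real.pi_pos]) hθ
    rwa [Real.cos_pi_div_three] at this
  -- side condition in coordinates
  have hside' : 0 < (x - 1) * s2 + y * c2 := by
    rw [show ((θ : ℂ) / 2) = ((θ / 2 : ℝ) : ℂ) by push_cast; ring, Complex.exp_mul_I] at hside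
    simp only [Complex.mul_im, Complex.mul_re, Complex.add_re, Complex.add_im, Complex.sub_re,
      Complex.sub_im, Complex.one_re, Complex.one_im, Complex.I_re, Complex.I_im,
      Complex.cos_ofReal_re, Complex.cos_ofReal_im, Complex.sin_ofReal_re,
      Complex.sin_ofReal_im] at hside
    nlinarith [hside]
  -- coordinates of the reflected point
  have hwre : (1 + Complex.exp (-(θ : ℂ) * Complex.I) * (starRingEnd ℂ) (z - 1)).re =
      1 + (x - 1) * c - y * s := by
    rw [Complex.exp_mul_I]
    simp [Complex.mul_re, ← Complex.ofReal_cos, ← Complex.ofReal_sin, ← hx, ← hy,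
      ← hcdef, ← hsdef]
    ring
  have hwim : (1 + Complex.exp (-(θ : ℂ) * Complex.I) * (starRingEnd ℂ) (z - 1)).im =
      -(x - 1) * s - y * c := by
    rw [Complex.exp_mul_I]
    simp [Complex.mul_im, ← Complex.ofReal_cos, ← Complex.ofReal_sin, ← hx, ← hy,
      ← hcdef, ← hsdef]
    ring
  rw [Set.mem_setOf_eq, hwre, hwim]
  -- multiply the hypotheses by cos θ > 0
  have e2 : s * x + c * y < s := by
    have := mul_lt_mul_of_pos_left h2 hcpos
    rw [mul_add, ← mul_assoc, hct] at this
    linarith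
  have e3 : 2 * s + (x - 1) * s - y * c > 0 := by
    have := mul_lt_mul_of_pos_left h3 hcpos
    rw [mul_add, ← mul_assoc, mul_neg, hct] at this
    nlinarith
  -- the key positivity for the third inequality
  have keyid : 2 * s + 2 * s * c * (x - 1) + y * (c ^ 2 - s ^ 2) =
      2 * c2 * (2 * c - 1) * ((x - 1) * s2 + y * c2) + (2 * s + (x - 1) * s - y * c) := by
    rw [hhalf_s, hhalf_c]
    linear_combination (-(4 * c2 ^ 2 * y)) * hpy2
  have keypos : 0 < 2 * s + 2 * s * c * (x - 1) + y * (c ^ 2 - s ^ 2) := by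
    rw [keyid]
    have : 0 ≤ 2 * c2 * (2 * c - 1) * ((x - 1) * s2 + y * c2) :=
      mul_nonneg (mul_nonneg (by linarith) (by linarith)) hside'.le
    linarith
  have hpy : s ^ 2 + c ^ 2 = 1 := Real.sin_sq_add_cos_sq θ
  refine ⟨by linarith [e2], ?_, ?_⟩
  · -- t * X + Y < t
    have expand : c * (Real.tan θ * (1 + (x - 1) * c - y * s) + (-(x - 1) * s - y * c)) =
        c * Real.tan θ - y := by
      linear_combination ((1 + (x - 1) * c - y * s) - 1) * hct + (-y) * hpy
    have hgoal : c * (Real.tan θ * (1 + (x - 1) * c - y * s) + (-(x - 1) * s - y * c)) <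
        c * Real.tan θ := by
      rw [expand]
      linarith
    exact lt_of_mul_lt_mul_left hgoal hcpos.le
  · -- -t * X + Y < t
    have expand : c * (-Real.tan θ * (1 + (x - 1) * c - y * s) + (-(x - 1) * s - y * c)) =
        c * Real.tan θ - (2 * s + 2 * s * c * (x - 1) + y * (c ^ 2 - s ^ 2)) := by
      linear_combination (-(1 + (x - 1) * c - y * s) - 1) * hct
    have hgoal : c * (-Real.tan θ * (1 + (x - 1) * c - y * s) + (-(x - 1) * s - y * c)) <
        c * Real.tan θ := by
      rw [expand]
      linarith [keypos]
    exact lt_of_mul_lt_mul_left hgoal hcpos.le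
end
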